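/- arXiv:2407.13395 — 6 statements merged into one kernel-verified Lean document; each statement's English description precedes it below -/
import Mathlib

section
/- Let X be a Hausdorff space, U ⊆ X both Fσ and Gδ in X, and A ⊆ U. If φ : U → A is a piecewise continuous retraction and g : (X \ U) → A is continuous, then the map Φ : X → A defined by Φ(x) = φ(x) for x ∈ U and Φ(x) = g(x) for x ∈ X \ U is a piecewise continuous retraction of X onto A extending φ. -/
/-- A map is piecewise continuous if there is an increasing sequence of closed
subsets covering the domain on each of which the map is continuous. -/
def PiecewiseContinuous {X Y : Type*} [TopologicalSpace X] [TopologicalSpace Y]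
    (f : X → Y) : Prop :=
  ∃ S : ℕ → Set X, (∀ n, IsClosed (S n)) ∧ Monotone S ∧ (⋃ n, S n) = Set.univ ∧
    ∀ n, ContinuousOn f (S n)

/-- `A` is an Fσ set: a countable union of closed sets. -/
def IsFσ {X : Type*} [TopologicalSpace X] (A : Set X) : Prop :=
  ∃ F : ℕ → Set X, (∀ n, IsClosed (F n)) ∧ (⋃ n, F n) = A

/-- Pasting lemma: continuity on a union of two closed sets. -/
lemma continuousOn_union_of_isClosed {X Y : Type*} [TopologicalSpace X]
    [TopologicalSpace Y] {s t : Set X} {f : X → Y} (hs : IsClosed s) (ht : IsClosed t)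
    (hfs : ContinuousOn f s) (hft : ContinuousOn f t) : ContinuousOn f (s ∪ t) := by
  intro x hx
  rw [continuousWithinAt_union]
  constructor
  · by_cases h : x ∈ s
    · exact hfs x h
    · exact continuousWithinAt_of_notMem_closure (by rwa [hs.closure_eq])
  · by_cases h : x ∈ t
    · exact hft x h
    · exact continuousWithinAt_of_notMem_closure (by rwa [ht.closure_eq])

/-- If `U` is both Fσ and Gδ in a Hausdorff space `X`, `A ⊆ U`, `φ : U → A` is a
piecewise continuous retraction and `g : X \ U → A` is continuous, then `Φ`
glued from `φ` and `g` is a piecewise continuous retraction of `X` onto `A`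
extending `φ`. -/
theorem stmt2 {X : Type*} [TopologicalSpace X] [T2Space X] (U A : Set X)
    (hAU : A ⊆ U) (hFσ : IsFσ U) (hGδ : IsGδ U)
    (φ : U → A) (hφpc : PiecewiseContinuous φ)
    (hφretr : ∀ x (hx : x ∈ A), φ ⟨x, hAU hx⟩ = ⟨x, hx⟩)
    (g : (Uᶜ : Set X) → A) (hg : Continuous g)
    (Φ : X → A)
    (hΦ : ∀ x, (∀ h : x ∈ U, Φ x = φ ⟨x, h⟩) ∧ (∀ h : x ∈ Uᶜ, Φ x = g ⟨x, h⟩)) :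
    (∀ a : A, Φ a = a) ∧ (∀ u : U, Φ u = φ u) ∧ PiecewiseContinuous Φ := by
  refine ⟨fun a => by rw [(hΦ a).1 (hAU a.2), hφretr a a.2], fun u => (hΦ u).1 u.2, ?_⟩
  -- Fσ data for U
  obtain ⟨F, hFcl, hFU⟩ := hFσ
  -- Fσ data for Uᶜ (from Gδ of U)
  obtain ⟨O, hOopen, hOU⟩ := hGδ.eq_iInter_nat
  set K : ℕ → Set X := fun n => (O n)ᶜ with hK
  have hKcl : ∀ n, IsClosed (K n) := fun n => (hOopen n).isClosed_compl
  have hKU : (⋃ n, K n) = Uᶜ := by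
    rw [hK, hOU]; simp [Set.compl_iInter]
  -- piecewise data for φ
  obtain ⟨S, hScl, hSmono, hScov, hScont⟩ := hφpc
  -- extract closed sets in X cutting out the S n
  have hSC : ∀ n, ∃ C : Set X, IsClosed C ∧ Subtype.val ⁻¹' C = S n := by
    intro n
    obtain ⟨C, hC, hCe⟩ := (isClosed_induced_iff).1 (hScl n)
    exact ⟨C, hC, hCe⟩
  choose C hCcl hCS using hSC
  -- accumulated sequences
  set F' : ℕ → Set X := fun n => ⋃ k ∈ Finset.range (n + 1), F k
  set K' : ℕ → Set X := fun n => ⋃ k ∈ Finset.range (n + 1), K k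
  set C' : ℕ → Set X := fun n => ⋃ k ∈ Finset.range (n + 1), C k
  set T : ℕ → Set X := fun n => (C' n ∩ F' n) ∪ K' n with hT
  have hF'cl : ∀ n, IsClosed (F' n) := fun n => isClosed_biUnion_finset (fun k _ => hFcl k)
  have hK'cl : ∀ n, IsClosed (K' n) := fun n => isClosed_biUnion_finset (fun k _ => hKcl k)
  have hC'cl : ∀ n, IsClosed (C' n) := fun n => isClosed_biUnion_finset (fun k _ => hCcl k)
  have mono_biUnion : ∀ (G : ℕ → Set X), Monotone (fun n => ⋃ k ∈ Finset.range (n + 1), G k) := by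
    intro G m n hmn
    exact Set.biUnion_subset_biUnion_left (fun k hk =>
      Finset.mem_range.2 (lt_of_lt_of_le (Finset.mem_range.1 hk) (by omega)))
  -- key: preimage of C' n in U is S n
  have hC'S : ∀ n, (Subtype.val ⁻¹' (C' n) : Set U) = S n := by
    intro n
    ext u
    simp only [C', Set.preimage_iUnion, Set.mem_iUnion, Set.mem_preimage, Finset.mem_range]
    constructor
    · rintro ⟨k, hk, hu⟩
      have : u ∈ S k := by rw [← hCS k]; exact hu
      exact hSmono (Nat.lt_succ_iff.1 hk) this
    · intro hu
      have hu' : u ∈ Subtype.val ⁻¹' C n := by rw [hCS n]; exact hu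
      exact ⟨n, Nat.lt_succ_self n, hu'⟩
  -- F' n ⊆ U
  have hF'U : ∀ n, F' n ⊆ U := by
    intro n x hx
    rw [← hFU]
    simp only [F', Set.mem_iUnion] at hx ⊢
    obtain ⟨k, _, hk⟩ := hx
    exact ⟨k, hk⟩
  have hK'U : ∀ n, K' n ⊆ Uᶜ := by
    intro n x hx
    rw [← hKU]
    simp only [K', Set.mem_iUnion] at hx ⊢
    obtain ⟨k, _, hk⟩ := hx
    exact ⟨k, hk⟩
  refine ⟨T, fun n => ((hC'cl n).inter (hF'cl n)).union (hK'cl n),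
    fun m n hmn => Set.union_subset_union
      (Set.inter_subset_inter (mono_biUnion C hmn) (mono_biUnion F hmn))
      (mono_biUnion K hmn), ?_, ?_⟩
  · -- covering
    apply Set.eq_univ_of_forall
    intro x
    simp only [Set.mem_iUnion, hT]
    by_cases hx : x ∈ U
    · -- x ∈ S m for some m, and x ∈ F j for some j
      have h1 : (⟨x, hx⟩ : U) ∈ ⋃ n, S n := by rw [hScov]; trivial
      obtain ⟨m, hm⟩ := Set.mem_iUnion.1 h1
      have h2 : x ∈ ⋃ n, F n := by rw [hFU]; exact hx
      obtain ⟨j, hj⟩ := Set.mem_iUnion.1 h2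
      refine ⟨max m j, Or.inl ⟨?_, ?_⟩⟩
      · have : (⟨x, hx⟩ : U) ∈ S (max m j) := hSmono (le_max_left m j) hm
        rw [← hC'S (max m j)] at this
        exact this
      · simp only [F', Set.mem_iUnion, Finset.mem_range]
        exact ⟨j, Nat.lt_succ_of_le (le_max_right m j), hj⟩
    · have h2 : x ∈ ⋃ n, K n := by rw [hKU]; exact hx
      obtain ⟨j, hj⟩ := Set.mem_iUnion.1 h2
      refine ⟨j, Or.inr ?_⟩
      simp only [K', Set.mem_iUnion, Finset.mem_range]
      exact ⟨j, Nat.lt_succ_self j, hj⟩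
  · -- continuity on each T n
    intro n
    apply continuousOn_union_of_isClosed ((hC'cl n).inter (hF'cl n)) (hK'cl n)
    · -- on C' n ∩ F' n ⊆ U, Φ agrees with φ which is continuous on S n
      have hsub : C' n ∩ F' n ⊆ U := fun x hx => hF'U n hx.2
      rw [continuousOn_iff_continuous_restrict]
      have hrestr : Continuous ((S n).restrict φ) :=
        continuousOn_iff_continuous_restrict.1 (hScont n)
      have hj : Continuous (fun x : (C' n ∩ F' n : Set X) =>
          (⟨⟨x.1, hsub x.2⟩, by rw [← hC'S n]; exact x.2.1⟩ : S n)) := by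
        refine Continuous.subtype_mk (Continuous.subtype_mk ?_ _) _
        exact continuous_subtype_val
      have : (C' n ∩ F' n : Set X).restrict Φ = (S n).restrict φ ∘
          (fun x : (C' n ∩ F' n : Set X) =>
            (⟨⟨x.1, hsub x.2⟩, by rw [← hC'S n]; exact x.2.1⟩ : S n)) := by
        funext x
        exact (hΦ x.1).1 (hsub x.2)
      change Continuous ((C' n ∩ F' n : Set X).restrict Φ)
      rw [this]
      exact hrestr.comp hj
    · -- on K' n ⊆ Uᶜ, Φ agrees with g
      rw [continuousOn_iff_continuous_restrict]
      have : (K' n).restrict Φ = g ∘ (fun x : (K' n : Set X) => (⟨x.1, hK'U n x.2⟩ : (Uᶜ : Set X))) := by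
        funext x
        exact (hΦ x.1).2 (hK'U n x.2)
      change Continuous ((K' n).restrict Φ)
      rw [this]
      exact hg.comp (Continuous.subtype_mk continuous_subtype_val _)
end

section
/- Let X be a perfectly normal topological space, U ⊆ X open, and A ⊆ U a subset that is both Fσ and Gδ in X, with a fixed point a₀ ∈ A. If φ : U → A is a piecewise continuous retraction, then Φ : X → A defined by Φ(x) = φ(x) for x ∈ U and Φ(x) = a₀ for x ∈ X \ U is a piecewise continuous retraction of X onto A extending φ. -/
private lemma continuousOn_union_closed {X Y : Type*} [TopologicalSpace X] [TopologicalSpace Y]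
    {f : X → Y} {s t : Set X} (hs : IsClosed s) (ht : IsClosed t)
    (hfs : ContinuousOn f s) (hft : ContinuousOn f t) : ContinuousOn f (s ∪ t) := by
  have : s ∪ t = ⋃ b : Bool, (if b then s else t) := by
    ext x; rw [Set.union_eq_iUnion]; simp [Bool.cond_eq_ite]
  rw [this]
  exact (locallyFinite_of_finite _).continuousOn_iUnion
    (fun b => by cases b <;> simpa) (fun b => by cases b <;> simpa)

/-- If `X` is perfectly normal, `U ⊆ X` is open, `A ⊆ U` is both Fσ and Gδ in `X`
with a point `a₀ ∈ A`, and `φ : U → A` is a piecewise continuous retraction, then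
`Φ` equal to `φ` on `U` and constantly `a₀` off `U` is a piecewise continuous
retraction of `X` onto `A` extending `φ`. -/
theorem stmt3 {X : Type*} [TopologicalSpace X] [PerfectlyNormalSpace X]
    (U A : Set X) (hU : IsOpen U) (hAU : A ⊆ U)
    (hFσ : IsFσ A) (hGδ : IsGδ A) (a₀ : A)
    (φ : U → A) (hφpc : PiecewiseContinuous φ)
    (hφretr : ∀ x (hx : x ∈ A), φ ⟨x, hAU hx⟩ = ⟨x, hx⟩)
    (Φ : X → A)
    (hΦ : ∀ x, (∀ h : x ∈ U, Φ x = φ ⟨x, h⟩) ∧ (x ∉ U → Φ x = a₀)) :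
    (∀ a : A, Φ a = a) ∧ (∀ u : U, Φ u = φ u) ∧ PiecewiseContinuous Φ := by
  refine ⟨fun a => ?_, fun u => (hΦ u).1 u.2, ?_⟩
  · rw [(hΦ a).1 (hAU a.2), hφretr a a.2]
  -- U is an Fσ set, with a monotone closed family
  have hUc : IsGδ Uᶜ := PerfectlyNormalSpace.closed_gdelta hU.isClosed_compl
  obtain ⟨V, hVopen, hVeq⟩ := isGδ_iff_eq_iInter_nat.1 hUc
  set F : ℕ → Set X := fun n => ⋃ k ≤ n, (V k)ᶜ with hF
  have hFclosed : ∀ n, IsClosed (F n) := fun n =>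
    Set.Finite.isClosed_biUnion (Set.finite_Iic n) (fun k _ => (hVopen k).isClosed_compl)
  have hFmono : Monotone F := fun m n hmn =>
    Set.biUnion_subset_biUnion_left fun k hk => le_trans hk hmn
  have hFsub : ∀ n, F n ⊆ U := by
    intro n x hx
    simp only [hF, Set.mem_iUnion] at hx
    obtain ⟨k, _, hk⟩ := hx
    by_contra hxU
    have hxc : x ∈ Uᶜ := hxU
    rw [hVeq] at hxc
    exact hk (Set.mem_iInter.1 hxc k)
  have hFcov : ∀ x ∈ U, ∃ n, x ∈ F n := by
    intro x hx
    have : x ∉ ⋂ n, V n := by rw [← hVeq]; exact fun h => h hx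
    obtain ⟨k, hk⟩ := by simpa [Set.mem_iInter] using this
    exact ⟨k, Set.mem_iUnion.2 ⟨k, Set.mem_iUnion.2 ⟨le_rfl, hk⟩⟩⟩
  -- the pieces for φ
  obtain ⟨S, hSclosed, hSmono, hScov, hScont⟩ := hφpc
  -- D n : closure in X of the image of S n
  set D : ℕ → Set X := fun n => closure ((↑) '' S n) with hD
  have hDmono : Monotone D := fun m n hmn =>
    closure_mono (Set.image_mono (hSmono hmn))
  have hDU : ∀ n, D n ∩ U = (↑) '' S n := by
    intro n
    apply Set.Subset.antisymm
    · intro x ⟨hxD, hxU⟩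
      -- S n is closed in the subtype, so its image is "closed in U"
      have h1 : ContinuousWithinAt (fun y : U => (y : X)) Set.univ ⟨x, hxU⟩ :=
        continuous_subtype_val.continuousWithinAt
      -- use: closure of image ∩ U ⊆ image of closure
      have : (⟨x, hxU⟩ : U) ∈ closure (S n) := by
        rw [closure_subtype]
        exact hxD
      rw [(hSclosed n).closure_eq] at this
      exact ⟨⟨x, hxU⟩, this, rfl⟩
    · intro x hx
      obtain ⟨y, hy, rfl⟩ := hx
      exact ⟨subset_closure (Set.mem_image_of_mem _ hy), y.2⟩
  -- the pieces for Φ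
  refine ⟨fun n => Uᶜ ∪ (D n ∩ F n), fun n => ?_, fun m n hmn => ?_, ?_, fun n => ?_⟩
  · exact hU.isClosed_compl.union (isClosed_closure.inter (hFclosed n))
  · exact Set.union_subset_union_right _
      (Set.inter_subset_inter (hDmono hmn) (hFmono hmn))
  · apply Set.eq_univ_of_forall
    intro x
    by_cases hx : x ∈ U
    · obtain ⟨m, hm⟩ := hFcov x hx
      have : (⟨x, hx⟩ : U) ∈ ⋃ n, S n := hScov ▸ Set.mem_univ _
      obtain ⟨k, hk⟩ := Set.mem_iUnion.1 this
      refine Set.mem_iUnion.2 ⟨max m k, Or.inr ⟨?_, hFmono (le_max_left m k) hm⟩⟩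
      exact hDmono (le_max_right m k) (subset_closure (Set.mem_image_of_mem _ hk))
    · exact Set.mem_iUnion.2 ⟨0, Or.inl hx⟩
  · -- ContinuousOn Φ (Uᶜ ∪ (D n ∩ F n))
    apply continuousOn_union_closed hU.isClosed_compl
      (isClosed_closure.inter (hFclosed n))
    · -- constant on Uᶜ
      have : Set.EqOn Φ (fun _ => a₀) Uᶜ := fun x hx => (hΦ x).2 hx
      exact (continuousOn_const).congr this
    · -- on D n ∩ F n = (↑) '' S n ∩ F n ⊆ U, Φ = φ ∘ inclusion
      have hsub : D n ∩ F n ⊆ (↑) '' S n := by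
        intro x ⟨hxD, hxF⟩
        rw [← hDU n]
        exact ⟨hxD, hFsub n hxF⟩
      apply ContinuousOn.mono ?_ hsub
      rw [continuousOn_iff_continuous_restrict]
      have hres : Continuous ((S n).restrict φ) :=
        continuousOn_iff_continuous_restrict.1 (hScont n)
      have hg : Continuous (fun x : ((↑) '' S n : Set X) =>
          (⟨⟨x, by obtain ⟨y, _, hyx⟩ := x.2; exact hyx ▸ y.2⟩, by
            obtain ⟨y, hy, hyx⟩ := x.2
            have : (⟨(x : X), hyx ▸ y.2⟩ : U) = y := Subtype.ext hyx.symm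
            rw [this]; exact hy⟩ : S n)) := by
        refine Continuous.subtype_mk (Continuous.subtype_mk ?_ _) _
        exact continuous_subtype_val
      have : ((↑) '' S n : Set X).restrict Φ =
          ((S n).restrict φ) ∘ (fun x : ((↑) '' S n : Set X) =>
          (⟨⟨x, by obtain ⟨y, _, hyx⟩ := x.2; exact hyx ▸ y.2⟩, by
            obtain ⟨y, hy, hyx⟩ := x.2
            have : (⟨(x : X), hyx ▸ y.2⟩ : U) = y := Subtype.ext hyx.symm
            rw [this]; exact hy⟩ : S n)) := by
        funext x
        exact (hΦ x).1 _
      change Continuous (((↑) '' S n : Set X).restrict Φ)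
      rw [this]
      exact hres.comp hg
end

section
/- Let Y be a nontrivial normed space, B = {x ∈ Y : ‖x‖ ≤ 1} the closed unit ball, and S = {x ∈ Y : ‖x‖ = 1} the unit sphere; fix t ∈ S. Then the map Φ : B → S defined by Φ(x) = x/‖x‖ for x ≠ 0 and Φ(0) = t is a piecewise continuous retraction of the closed unit ball onto the unit sphere, with witnessing closed sets X₀ = {0} ∪ {x ∈ B : ‖x‖ ≥ 1} and X_n = {0} ∪ {x ∈ B : ‖x‖ ≥ 1/n}. -/
/-- The unit sphere of a nontrivial normed space is a piecewise continuous retract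
of the closed unit ball: `Φ x = x / ‖x‖`, `Φ 0 = t`, maps the ball onto the sphere,
fixes the sphere, and the closed sets `Xₙ = {0} ∪ {x ∈ B : ‖x‖ ≥ 1/(n+1)}` form an
increasing cover of the ball on each of which `Φ` is continuous. -/
theorem stmt5 {Y : Type*} [NormedAddCommGroup Y] [NormedSpace ℝ Y] [Nontrivial Y]
    (t : Y) (ht : t ∈ Metric.sphere (0 : Y) 1)
    (Φ : Y → Y)
    (hΦ : ∀ x, (x ≠ 0 → Φ x = ‖x‖⁻¹ • x) ∧ (x = 0 → Φ x = t)) :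
    (∀ x ∈ Metric.closedBall (0 : Y) 1, Φ x ∈ Metric.sphere (0 : Y) 1) ∧
    (∀ x ∈ Metric.sphere (0 : Y) 1, Φ x = x) ∧
    (∀ n : ℕ, IsClosed
      ({0} ∪ {x ∈ Metric.closedBall (0 : Y) 1 | 1 / (n + 1 : ℝ) ≤ ‖x‖})) ∧
    Monotone (fun n : ℕ =>
      ({0} ∪ {x ∈ Metric.closedBall (0 : Y) 1 | 1 / (n + 1 : ℝ) ≤ ‖x‖} : Set Y)) ∧
    (⋃ n : ℕ, ({0} ∪ {x ∈ Metric.closedBall (0 : Y) 1 | 1 / (n + 1 : ℝ) ≤ ‖x‖} : Set Y))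
      = Metric.closedBall (0 : Y) 1 ∧
    (∀ n : ℕ, ContinuousOn Φ
      ({0} ∪ {x ∈ Metric.closedBall (0 : Y) 1 | 1 / (n + 1 : ℝ) ≤ ‖x‖})) := by
  have sphere_norm : ∀ x : Y, x ∈ Metric.sphere (0 : Y) 1 ↔ ‖x‖ = 1 := by
    intro x; simp [Metric.mem_sphere, dist_zero_right]
  refine ⟨?_, ?_, ?_, ?_, ?_, ?_⟩
  · intro x _
    rcases eq_or_ne x 0 with rfl | hx
    · rw [(hΦ 0).2 rfl]; exact ht
    · rw [(hΦ x).1 hx, sphere_norm]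
      have hx' : ‖x‖ ≠ 0 := norm_ne_zero_iff.mpr hx
      rw [norm_smul]
      simp [abs_of_nonneg (inv_nonneg.mpr (norm_nonneg x)), inv_mul_cancel₀ hx']
  · intro x hx
    have h1 : ‖x‖ = 1 := (sphere_norm x).mp hx
    have hx0 : x ≠ 0 := by intro h; rw [h] at h1; simp at h1
    rw [(hΦ x).1 hx0, h1]; simp
  · intro n
    refine IsClosed.union isClosed_singleton ?_
    have : {x ∈ Metric.closedBall (0 : Y) 1 | 1 / (n + 1 : ℝ) ≤ ‖x‖}
        = Metric.closedBall (0 : Y) 1 ∩ {x : Y | 1 / (n + 1 : ℝ) ≤ ‖x‖} := rfl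
    rw [this]
    exact Metric.isClosed_closedBall.inter (isClosed_le continuous_const continuous_norm)
  · intro m n hmn x hx
    rcases hx with h | ⟨hb, hn⟩
    · exact Or.inl h
    · refine Or.inr ⟨hb, le_trans ?_ hn⟩
      have : (m : ℝ) ≤ n := Nat.cast_le.mpr hmn
      apply one_div_le_one_div_of_le (by positivity) (by linarith)
  · ext x
    simp only [Set.mem_iUnion, Set.mem_union, Set.mem_singleton_iff, Set.mem_setOf_eq]
    constructor
    · rintro ⟨n, rfl | ⟨hb, _⟩⟩
      · simp
      · exact hb
    · intro hb
      rcases eq_or_ne x 0 with rfl | hx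
      · exact ⟨0, Or.inl rfl⟩
      · have hpos : 0 < ‖x‖ := norm_pos_iff.mpr hx
        obtain ⟨n, hn⟩ := exists_nat_gt (1 / ‖x‖)
        refine ⟨n, Or.inr ⟨hb, ?_⟩⟩
        rw [div_le_iff₀ (by positivity)]
        rw [div_lt_iff₀ hpos] at hn
        nlinarith
  · intro n x hx
    rcases hx with h | ⟨hb, hn⟩
    · -- x = 0, isolated point
      simp only [Set.mem_singleton_iff] at h
      subst h
      have : Metric.ball (0 : Y) (1 / (n + 1 : ℝ)) ∩
          ({0} ∪ {x ∈ Metric.closedBall (0 : Y) 1 | 1 / (n + 1 : ℝ) ≤ ‖x‖}) = {0} := by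
        ext y
        simp only [Set.mem_inter_iff, Metric.mem_ball, dist_zero_right, Set.mem_union,
          Set.mem_singleton_iff, Set.mem_setOf_eq]
        constructor
        · rintro ⟨hy, rfl | ⟨_, hy'⟩⟩
          · rfl
          · linarith
        · rintro rfl; simp; positivity
      apply ContinuousWithinAt.congr_of_eventuallyEq (f := fun _ => Φ 0)
        continuousWithinAt_const
      · filter_upwards [inter_mem_nhdsWithin _
          (Metric.ball_mem_nhds 0 (by positivity : (0:ℝ) < 1 / (n + 1 : ℝ)))] with y hy
        have : y = 0 := by
          rw [Set.inter_comm] at hy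
          have := this ▸ hy
          simpa using this
        rw [this]
      · rfl
    · -- x ≠ 0
      have hpos : 0 < ‖x‖ := lt_of_lt_of_le (by positivity) hn
      have hx0 : x ≠ 0 := norm_pos_iff.mp hpos
      have hcont : ContinuousAt (fun y : Y => ‖y‖⁻¹ • y) x :=
        ((continuous_norm.continuousAt.inv₀ (ne_of_gt hpos)).smul continuousAt_id)
      apply ContinuousWithinAt.congr_of_eventuallyEq
        (hcont.continuousWithinAt)
      · filter_upwards [inter_mem_nhdsWithin _
          (Metric.ball_mem_nhds x (by positivity : (0:ℝ) < ‖x‖))] with y hy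
        have hy0 : y ≠ 0 := by
          intro h; subst h
          simp only [Set.mem_inter_iff, Metric.mem_ball, dist_zero_left] at hy
          exact lt_irrefl _ hy.2
        exact (hΦ y).1 hy0
      · exact (hΦ x).1 hx0
end

section
/- Let X be a normed space of dimension at least 2 and K⁰ = {x ∈ X : ‖x‖ < 1} the open unit ball. Define Φ : X → X by Φ(x) = (1 - ⌊‖x‖⌋/‖x‖)·x for x ≠ 0 and Φ(0) = 0. Then Φ maps X onto K⁰, satisfies Φ(x) = x for all x ∈ K⁰ (so it is a retraction onto K⁰), and is piecewise continuous: the closed sets B_{n,j} = {x : n ≤ ‖x‖ ≤ n + 1 - 1/j} (for n ≥ 0, j ≥ 1) cover X and Φ is continuous on each B_{n,j}. -/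
/-- In a normed space of dimension at least 2, the map
`Φ x = (1 - ⌊‖x‖⌋/‖x‖) • x` (with `Φ 0 = 0`) is a piecewise continuous retraction
of `X` onto the open unit ball `K⁰`: it maps `X` onto `K⁰`, fixes `K⁰` pointwise,
and the closed sets `B_{n,j} = {x : n ≤ ‖x‖ ≤ n + 1 - 1/(j+1)}` cover `X` and `Φ`
is continuous on each of them. -/
theorem stmt6 {X : Type*} [NormedAddCommGroup X] [NormedSpace ℝ X]
    (hdim : 2 ≤ Module.rank ℝ X)
    (Φ : X → X)
    (hΦ : ∀ x, (x ≠ 0 → Φ x = (1 - (⌊‖x‖⌋ : ℝ) / ‖x‖) • x) ∧ (x = 0 → Φ x = 0)) :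
    (∀ x, Φ x ∈ Metric.ball (0 : X) 1) ∧
    (∀ y ∈ Metric.ball (0 : X) 1, ∃ x, Φ x = y) ∧
    (∀ x ∈ Metric.ball (0 : X) 1, Φ x = x) ∧
    (∀ n j : ℕ, IsClosed {x : X | (n : ℝ) ≤ ‖x‖ ∧ ‖x‖ ≤ n + 1 - 1 / (j + 1)}) ∧
    (⋃ n : ℕ, ⋃ j : ℕ, {x : X | (n : ℝ) ≤ ‖x‖ ∧ ‖x‖ ≤ n + 1 - 1 / (j + 1)})
      = Set.univ ∧
    (∀ n j : ℕ, ContinuousOn Φ {x : X | (n : ℝ) ≤ ‖x‖ ∧ ‖x‖ ≤ n + 1 - 1 / (j + 1)}) ∧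
    PiecewiseContinuous Φ := by
  set B : ℕ → ℕ → Set X := fun n j => {x : X | (n : ℝ) ≤ ‖x‖ ∧ ‖x‖ ≤ n + 1 - 1 / (j + 1)}
    with hB
  -- Φ fixes the ball
  have hfix : ∀ x : X, ‖x‖ < 1 → Φ x = x := by
    intro x hx
    rcases eq_or_ne x 0 with rfl | hx0
    · exact ((hΦ 0).2 rfl)
    · rw [(hΦ x).1 hx0]
      have h0 : ⌊‖x‖⌋ = 0 := Int.floor_eq_zero_iff.2 ⟨norm_nonneg x, hx⟩
      simp [h0]
  have hmem : ∀ x : X, ‖Φ x‖ < 1 := by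
    intro x
    rcases eq_or_ne x 0 with rfl | hx0
    · rw [(hΦ 0).2 rfl]; simp
    · have hxpos : (0:ℝ) < ‖x‖ := norm_pos_iff.2 hx0
      have hfl : (⌊‖x‖⌋ : ℝ) ≤ ‖x‖ := Int.floor_le _
      have hnn : (0:ℝ) ≤ 1 - (⌊‖x‖⌋ : ℝ) / ‖x‖ := by
        rw [sub_nonneg, div_le_one hxpos]; exact hfl
      rw [(hΦ x).1 hx0, norm_smul, Real.norm_eq_abs, abs_of_nonneg hnn, sub_mul,
        one_mul, div_mul_cancel₀ _ hxpos.ne']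
      have := Int.lt_floor_add_one ‖x‖
      linarith
  have hclosed : ∀ n j : ℕ, IsClosed (B n j) := by
    intro n j
    have : B n j = {x : X | (n : ℝ) ≤ ‖x‖} ∩ {x : X | ‖x‖ ≤ n + 1 - 1 / (j + 1)} := rfl
    rw [this]
    exact (isClosed_le continuous_const continuous_norm).inter
      (isClosed_le continuous_norm continuous_const)
  have hBmono : ∀ n j j', j ≤ j' → B n j ⊆ B n j' := by
    intro n j j' hjj x hx
    refine ⟨hx.1, hx.2.trans ?_⟩
    have h1 : (1:ℝ) / (j' + 1) ≤ 1 / (j + 1) := by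
      apply one_div_le_one_div_of_le
      · positivity
      · have := (Nat.cast_le (α := ℝ)).2 hjj; linarith
    linarith
  have hcoverpt : ∀ x : X, ∃ n j : ℕ, x ∈ B n j := by
    intro x
    refine ⟨⌊‖x‖⌋.toNat, ?_⟩
    have h0 : (0:ℤ) ≤ ⌊‖x‖⌋ := Int.floor_nonneg.2 (norm_nonneg x)
    have hcast : ((⌊‖x‖⌋.toNat : ℕ) : ℝ) = (⌊‖x‖⌋ : ℝ) := by
      rw [← Int.cast_natCast, Int.toNat_of_nonneg h0]
    have hlt : ‖x‖ < (⌊‖x‖⌋.toNat : ℝ) + 1 := by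
      rw [hcast]; exact Int.lt_floor_add_one _
    obtain ⟨j, hj⟩ := exists_nat_one_div_lt (by linarith : (0:ℝ) < (⌊‖x‖⌋.toNat : ℝ) + 1 - ‖x‖)
    exact ⟨j, by rw [hcast]; exact Int.floor_le _, by linarith⟩
  have hcover : (⋃ n : ℕ, ⋃ j : ℕ, B n j) = Set.univ := by
    ext x
    simp only [Set.mem_iUnion, Set.mem_univ, iff_true]
    exact hcoverpt x
  have hcont : ∀ n j : ℕ, ContinuousOn Φ (B n j) := by
    intro n j
    have hffl : ∀ x ∈ B n j, ⌊‖x‖⌋ = (n : ℤ) := by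
      intro x hx
      have h2 : ‖x‖ < (n:ℝ) + 1 := by
        have : (0:ℝ) < 1 / (j + 1) := by positivity
        have := hx.2; linarith
      exact Int.floor_eq_iff.2 ⟨by exact_mod_cast hx.1, by exact_mod_cast h2⟩
    rcases Nat.eq_zero_or_pos n with rfl | hn
    · apply ContinuousOn.congr continuous_id.continuousOn
      intro x hx
      rcases eq_or_ne x 0 with rfl | hx0
      · exact (hΦ 0).2 rfl
      · rw [(hΦ x).1 hx0, hffl x hx]; simp
    · have hne : ∀ x ∈ B n j, ‖x‖ ≠ 0 := by
        intro x hx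
        have : (1:ℝ) ≤ (n:ℝ) := by exact_mod_cast hn
        have h1 := hx.1; exact ne_of_gt (by linarith)
      refine ContinuousOn.congr (f := fun x : X => (1 - (n:ℝ) / ‖x‖) • x) ?_ ?_
      · exact (continuousOn_const.sub (continuousOn_const.div
          continuous_norm.continuousOn hne)).smul continuousOn_id
      · intro x hx
        have hx0 : x ≠ 0 := by simpa [norm_eq_zero] using hne x hx
        rw [(hΦ x).1 hx0, hffl x hx]; simp
  have hpw : PiecewiseContinuous Φ := by
    refine ⟨fun k => ⋃ i : Fin (k+1), B i k, ?_, ?_, ?_, ?_⟩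
    · intro k; exact isClosed_iUnion_of_finite (fun i => hclosed i k)
    · intro k l hkl x hx
      simp only [Set.mem_iUnion] at hx ⊢
      obtain ⟨i, hi⟩ := hx
      exact ⟨⟨i, by have := i.isLt; omega⟩, hBmono _ k l hkl hi⟩
    · ext x; simp only [Set.mem_iUnion, Set.mem_univ, iff_true]
      obtain ⟨n, j, hx⟩ := hcoverpt x
      exact ⟨max n j, ⟨n, by omega⟩, hBmono n j (max n j) (le_max_right _ _) hx⟩
    · intro k
      exact (locallyFinite_of_finite _).continuousOn_iUnion (fun i => hclosed i k)
        (fun i => hcont i k)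
  exact ⟨fun x => by simpa [Metric.mem_ball, dist_eq_norm] using hmem x,
    fun y hy => ⟨y, hfix y (by simpa [Metric.mem_ball, dist_eq_norm] using hy)⟩,
    fun x hx => hfix x (by simpa [Metric.mem_ball, dist_eq_norm] using hx),
    hclosed, hcover, hcont, hpw⟩
end

section
/- Let X be a Hausdorff space, A ⊆ X both Fσ and Gδ, and φ : X → A a piecewise continuous retraction. Then for every piecewise continuous function f : A → ℝ, the composition T_φ(f) = f ∘ φ : X → ℝ is piecewise continuous and extends f (i.e., (f ∘ φ)(a) = f(a) for all a ∈ A); moreover T_φ is linear and positive (f ≥ 0 implies T_φ(f) ≥ 0). -/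
theorem piecewiseContinuous_comp {X Y Z : Type*} [TopologicalSpace X]
    [TopologicalSpace Y] [TopologicalSpace Z] {φ : X → Y} {f : Y → Z}
    (hφ : PiecewiseContinuous φ) (hf : PiecewiseContinuous f) :
    PiecewiseContinuous (fun x => f (φ x)) := by
  obtain ⟨S, hScl, hSmono, hScov, hScont⟩ := hφ
  obtain ⟨T, hTcl, hTmono, hTcov, hTcont⟩ := hf
  refine ⟨fun n => S n ∩ φ ⁻¹' (T n), fun n => ?_, fun m n hmn => ?_, ?_, fun n => ?_⟩
  · exact (hScont n).preimage_isClosed_of_isClosed (hScl n) (hTcl n)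
  · exact Set.inter_subset_inter (hSmono hmn) (Set.preimage_mono (hTmono hmn))
  · ext x
    simp only [Set.mem_iUnion, Set.mem_univ, iff_true]
    obtain ⟨m, hm⟩ : ∃ m, x ∈ S m := by
      have := hScov ▸ Set.mem_univ x; simpa [Set.mem_iUnion] using this
    obtain ⟨k, hk⟩ : ∃ k, φ x ∈ T k := by
      have := hTcov ▸ Set.mem_univ (φ x); simpa [Set.mem_iUnion] using this
    exact ⟨max m k, hSmono (le_max_left m k) hm, hTmono (le_max_right m k) hk⟩
  · exact (hTcont n).comp ((hScont n).mono Set.inter_subset_left)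
      (fun x hx => hx.2)

/-- If `A` is both Fσ and Gδ in a Hausdorff space `X` and `φ : X → A` is a
piecewise continuous retraction, then `T_φ f = f ∘ φ` is a positive linear
extension operator from piecewise continuous functions on `A` to piecewise
continuous functions on `X`. -/
theorem stmt8 {X : Type*} [TopologicalSpace X] [T2Space X] (A : Set X)
    (hFσ : IsFσ A) (hGδ : IsGδ A)
    (φ : X → A) (hφpc : PiecewiseContinuous φ) (hφretr : ∀ a : A, φ a = a) :
    (∀ f : A → ℝ, PiecewiseContinuous f →
      PiecewiseContinuous (fun x : X => f (φ x)) ∧ (∀ a : A, f (φ a) = f a)) ∧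
    (∀ (f g : A → ℝ) (c : ℝ) (x : X),
      (c • f + g) (φ x) = c * f (φ x) + g (φ x)) ∧
    (∀ f : A → ℝ, (∀ a, 0 ≤ f a) → ∀ x : X, 0 ≤ f (φ x)) := by
  refine ⟨fun f hf => ⟨piecewiseContinuous_comp hφpc hf, fun a => by rw [hφretr]⟩,
    fun f g c x => by simp, fun f hf x => hf (φ x)⟩
end

section
/- If φ : X → Y and f : Y → Z are piecewise continuous maps between topological spaces, where X is covered by an increasing sequence of closed sets (X_n) witnessing piecewise continuity of φ and Y by closed sets (Y_m) witnessing piecewise continuity of f, and additionally each restriction φ|_{X_n} is continuous with φ(X_n ∩ φ⁻¹(Y_m)) ⊆ Y_m, then f ∘ φ is piecewise continuous provided the sets X_n ∩ φ⁻¹(Y_m) are closed in X. In particular, if φ : X → A is piecewise continuous with A ⊆ X both Fσ and Gδ in a Hausdorff space X, and f : A → ℝ is piecewise continuous, then f ∘ φ : X → ℝ is piecewise continuous. -/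
lemma piecewise_comp {X Y Z : Type*} [TopologicalSpace X] [TopologicalSpace Y]
    [TopologicalSpace Z]
    (φ : X → Y) (f : Y → Z) (Xn : ℕ → Set X) (Ym : ℕ → Set Y)
    (hXmono : Monotone Xn) (hXcov : (⋃ n, Xn n) = Set.univ)
    (hφ : ∀ n, ContinuousOn φ (Xn n))
    (hYmono : Monotone Ym) (hYcov : (⋃ m, Ym m) = Set.univ)
    (hf : ∀ m, ContinuousOn f (Ym m))
    (hcl : ∀ n m, IsClosed (Xn n ∩ φ ⁻¹' (Ym m))) :
    PiecewiseContinuous (f ∘ φ) := by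
  refine ⟨fun n => Xn n ∩ φ ⁻¹' (Ym n), fun n => hcl n n, ?_, ?_, ?_⟩
  · intro a b hab
    exact Set.inter_subset_inter (hXmono hab) (Set.preimage_mono (hYmono hab))
  · apply Set.eq_univ_iff_forall.2
    intro x
    have hx : x ∈ ⋃ n, Xn n := hXcov ▸ Set.mem_univ x
    have hy : φ x ∈ ⋃ m, Ym m := hYcov ▸ Set.mem_univ (φ x)
    obtain ⟨n, hn⟩ := Set.mem_iUnion.1 hx
    obtain ⟨m, hm⟩ := Set.mem_iUnion.1 hy
    exact Set.mem_iUnion.2 ⟨max n m, hXmono (le_max_left n m) hn,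
      hYmono (le_max_right n m) hm⟩
  · intro n
    exact (hf n).comp ((hφ n).mono Set.inter_subset_left)
      (fun x hx => hx.2)

/-- Composition of piecewise continuous maps: if the witnessing closed covers
`(Xₙ)` of `φ` and `(Yₘ)` of `f` are such that each `Xₙ ∩ φ⁻¹(Yₘ)` is closed,
then `f ∘ φ` is piecewise continuous. In particular, if `φ : X → A` is a
piecewise continuous retraction onto an Fσ- and Gδ-subset `A` of a Hausdorff
space and `f : A → ℝ` is piecewise continuous, then `f ∘ φ` is piecewise
continuous. -/
theorem stmt10 :
    (∀ (X Y Z : Type) [TopologicalSpace X] [TopologicalSpace Y] [TopologicalSpace Z]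
      (φ : X → Y) (f : Y → Z) (Xn : ℕ → Set X) (Ym : ℕ → Set Y),
      (∀ n, IsClosed (Xn n)) → Monotone Xn → (⋃ n, Xn n) = Set.univ →
      (∀ n, ContinuousOn φ (Xn n)) →
      (∀ m, IsClosed (Ym m)) → Monotone Ym → (⋃ m, Ym m) = Set.univ →
      (∀ m, ContinuousOn f (Ym m)) →
      (∀ n m, φ '' (Xn n ∩ φ ⁻¹' (Ym m)) ⊆ Ym m) →
      (∀ n m, IsClosed (Xn n ∩ φ ⁻¹' (Ym m))) →
      PiecewiseContinuous (f ∘ φ)) ∧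
    (∀ (X : Type) [TopologicalSpace X] [T2Space X] (A : Set X),
      IsFσ A → IsGδ A →
      ∀ (φ : X → A), PiecewiseContinuous φ → (∀ a : A, φ a = a) →
      ∀ (f : A → ℝ), PiecewiseContinuous f → PiecewiseContinuous (f ∘ φ)) := by
  constructor
  · intro X Y Z _ _ _ φ f Xn Ym hXcl hXmono hXcov hφ hYcl hYmono hYcov hf _ hcl
    exact piecewise_comp φ f Xn Ym hXmono hXcov hφ hYmono hYcov hf hcl
  · intro X _ _ A _ _ φ hφpc _ f hfpc
    obtain ⟨Xn, hXcl, hXmono, hXcov, hφ⟩ := hφpc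
    obtain ⟨Ym, hYcl, hYmono, hYcov, hf⟩ := hfpc
    refine piecewise_comp φ f Xn Ym hXmono hXcov hφ hYmono hYcov hf ?_
    intro n m
    exact (hφ n).preimage_isClosed_of_isClosed (hXcl n) (hYcl m)
end
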